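/- Let P be a polynomial in U ∈ ℝ^(m×n) with P(UN) = (det N)^β P(U) for all N, and set h_P = exp(−tr Δ/(8π)) P and f_P(U) = h_P(U)·exp(−2π tr(Uᵀ U)). Then f_P satisfies the system (E − Δ_{−I}/(4π)) f_P = −(β + m)·I·f_P, where Δ_{−I} = −Δ. -/

import Mathlib

open scoped BigOperators
open Matrix MvPolynomial

set_option linter.unusedSectionVars false
set_option maxHeartbeats 1000000

/-- Partial derivative `∂/∂U_{ij}` of a function on `ℝ^(m×n)`. -/
noncomputable def pd {m n : ℕ} (i : Fin m) (j : Fin n)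
    (f : (Fin m → Fin n → ℝ) → ℝ) : (Fin m → Fin n → ℝ) → ℝ :=
  fun U => fderiv ℝ f U (Pi.single i (Pi.single j 1))

noncomputable def eCLM {m n : ℕ} (q : Fin m × Fin n) : (Fin m → Fin n → ℝ) →L[ℝ] ℝ :=
  (ContinuousLinearMap.proj q.2).comp
    (ContinuousLinearMap.proj (R := ℝ) (φ := fun _ : Fin m => Fin n → ℝ) q.1)

lemma eCLM_apply {m n : ℕ} (q : Fin m × Fin n) (W : Fin m → Fin n → ℝ) :
    eCLM q W = W q.1 q.2 := rfl

lemma eCLM_single {m n : ℕ} (q : Fin m × Fin n) (a : Fin m) (c : Fin n) :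
    eCLM q (Pi.single a (Pi.single c 1)) = if q = (a, c) then 1 else 0 := by
  rcases q with ⟨x, y⟩
  simp only [eCLM_apply, Pi.single_apply, Prod.ext_iff, ite_and]
  split <;> simp [Pi.single_apply]

lemma hasFDerivAt_evalP {m n : ℕ} (p : MvPolynomial (Fin m × Fin n) ℝ) (U : Fin m → Fin n → ℝ) :
    HasFDerivAt (fun W : Fin m → Fin n → ℝ => MvPolynomial.eval (fun q => W q.1 q.2) p)
      (∑ q : Fin m × Fin n,
        MvPolynomial.eval (fun r => U r.1 r.2) (pderiv q p) • eCLM q) U := by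
  induction p using MvPolynomial.induction_on with
  | C a =>
      simp only [eval_C, pderiv_C, map_zero, zero_smul, Finset.sum_const_zero]
      exact hasFDerivAt_const _ _
  | add p q hp hq =>
      simp only [map_add, add_smul, Finset.sum_add_distrib]
      exact hp.add hq
  | mul_X p s ih =>
      have hX : HasFDerivAt (fun W : Fin m → Fin n → ℝ => W s.1 s.2) (eCLM s) U :=
        (eCLM s).hasFDerivAt
      have h := ih.fun_mul hX
      simp only [eval_mul, eval_X] at h ⊢
      refine h.congr_fderiv ?_
      symm
      classical
      have : ∀ q : Fin m × Fin n,
          MvPolynomial.eval (fun r => U r.1 r.2) (pderiv q (p * X s)) • eCLM q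
          = (MvPolynomial.eval (fun r => U r.1 r.2) (pderiv q p) * (U s.1 s.2)) • eCLM q
            + (if q = s then MvPolynomial.eval (fun r => U r.1 r.2) p else 0) • eCLM q := by
        intro q
        rw [pderiv_mul]
        simp only [map_add, eval_mul, eval_X, add_smul, pderiv_X]
        congr 2
        rcases eq_or_ne q s with h | h
        · subst h; simp
        · simp [Pi.single_apply, h]
      rw [Finset.sum_congr rfl fun q _ => this q]
      rw [Finset.sum_add_distrib]
      have h2 : ∑ q : Fin m × Fin n,
          (if q = s then MvPolynomial.eval (fun r => U r.1 r.2) p else 0) • eCLM q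
          = (MvPolynomial.eval (fun r => U r.1 r.2) p) • eCLM s := by
        rw [Finset.sum_eq_single s]
        · simp
        · intro b _ hb; simp [hb]
        · intro hs; exact absurd (Finset.mem_univ s) hs
      rw [h2]
      rw [Finset.smul_sum]
      simp only [smul_smul]
      rw [add_comm]
      congr 1
      exact Finset.sum_congr rfl fun q _ => by rw [mul_comm]

lemma hasFDerivAt_gauss {m n : ℕ} (U : Fin m → Fin n → ℝ) :
    HasFDerivAt (fun W : Fin m → Fin n → ℝ => Real.exp (-2 * Real.pi * ∑ p, ∑ q, W p q ^ 2))
      (Real.exp (-2 * Real.pi * ∑ p, ∑ q, U p q ^ 2) •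
        ∑ q : Fin m × Fin n, (-4 * Real.pi * U q.1 q.2) • eCLM q) U := by
  have hsq : ∀ q : Fin m × Fin n, HasFDerivAt (fun W : Fin m → Fin n → ℝ => W q.1 q.2 ^ 2)
      ((2 * U q.1 q.2) • eCLM q) U := by
    intro q
    have := ((eCLM q).hasFDerivAt (x := U)).mul ((eCLM q).hasFDerivAt (x := U))
    simp only [eCLM_apply] at this
    have heq : (fun W : Fin m → Fin n → ℝ => W q.1 q.2 ^ 2)
        = fun W : Fin m → Fin n → ℝ => W q.1 q.2 * W q.1 q.2 := by
      funext W; rw [sq]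
    rw [heq]
    refine this.congr_fderiv ?_
    module
  have hsum : HasFDerivAt (fun W : Fin m → Fin n → ℝ => ∑ p, ∑ q, W p q ^ 2)
      (∑ q : Fin m × Fin n, (2 * U q.1 q.2) • eCLM q) U := by
    have : HasFDerivAt (fun W : Fin m → Fin n → ℝ => ∑ q : Fin m × Fin n, W q.1 q.2 ^ 2)
        (∑ q : Fin m × Fin n, (2 * U q.1 q.2) • eCLM q) U :=
      HasFDerivAt.fun_sum fun q _ => hsq q
    have heq : (fun W : Fin m → Fin n → ℝ => ∑ q : Fin m × Fin n, W q.1 q.2 ^ 2)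
        = fun W : Fin m → Fin n → ℝ => ∑ p, ∑ q, W p q ^ 2 := by
      funext W; rw [← Finset.sum_product']; rfl
    rwa [heq] at this
  have h1 := (hsum.const_mul (-2 * Real.pi)).exp
  refine h1.congr_fderiv ?_
  congr 1
  rw [Finset.smul_sum]
  refine Finset.sum_congr rfl fun q _ => ?_
  rw [smul_smul]
  congr 1
  ring

lemma pd_eval_mul_gauss {m n : ℕ} (p : MvPolynomial (Fin m × Fin n) ℝ) (a : Fin m) (c : Fin n)
    (U : Fin m → Fin n → ℝ) :
    pd a c (fun W : Fin m → Fin n → ℝ => MvPolynomial.eval (fun q => W q.1 q.2) p *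
        Real.exp (-2 * Real.pi * ∑ x, ∑ y, W x y ^ 2)) U
    = MvPolynomial.eval (fun q => U q.1 q.2)
        (pderiv (a, c) p - C (4 * Real.pi) * (X (a, c) * p)) *
        Real.exp (-2 * Real.pi * ∑ x, ∑ y, U x y ^ 2) := by
  classical
  have hf := (hasFDerivAt_evalP p U).fun_mul (hasFDerivAt_gauss U)
  rw [pd, hf.fderiv]
  simp only [ContinuousLinearMap.add_apply, ContinuousLinearMap.smul_apply,
    ContinuousLinearMap.coe_sum', Finset.sum_apply, eCLM_single, smul_eq_mul,
    mul_ite, mul_one, mul_zero, Finset.sum_ite_eq', Finset.mem_univ, if_true]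
  simp only [eval_sub, eval_mul, eval_C, eval_X]
  ring

/-- The normalized trace Laplacian `tr Δ` acting on polynomials. -/
noncomputable def trLapPoly {m n : ℕ}
    (p : MvPolynomial (Fin m × Fin n) ℝ) : MvPolynomial (Fin m × Fin n) ℝ :=
  ∑ c : Fin n, ∑ a : Fin m, pderiv (a, c) (pderiv (a, c) p)

variable {σ : Type*} [DecidableEq σ]

lemma pp_comm (x y : σ) (p : MvPolynomial σ ℝ) :
    pderiv x (pderiv y p) = pderiv y (pderiv x p) := by
  induction p using MvPolynomial.induction_on with
  | C a => simp [pderiv_C]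
  | add p q hp hq => simp [map_add, hp, hq]
  | mul_X p s hp =>
      have hx : ∀ z : σ, pderiv z (pderiv x (X s) : MvPolynomial σ ℝ) = 0 := by
        intro z; rcases eq_or_ne s x with h | h
        · subst h; simp
        · simp [pderiv_X_of_ne h]
      have hy : ∀ z : σ, pderiv z (pderiv y (X s) : MvPolynomial σ ℝ) = 0 := by
        intro z; rcases eq_or_ne s y with h | h
        · subst h; simp
        · simp [pderiv_X_of_ne h]
      simp only [pderiv_mul, map_add, hp, hx, hy, mul_zero, add_zero]
      ring

lemma pderiv_deg0 {p : MvPolynomial σ ℝ} (h : p.totalDegree = 0) (x : σ) :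
    pderiv x p = 0 := by
  rw [MvPolynomial.totalDegree_eq_zero_iff] at h
  conv_lhs => rw [p.as_sum]
  rw [map_sum]
  refine Finset.sum_eq_zero fun s hs => ?_
  simp [pderiv_monomial, h s hs x]

lemma pderiv_deg_le {p : MvPolynomial σ ℝ} {d : ℕ} (h : p.totalDegree ≤ d + 1) (x : σ) :
    (pderiv x p).totalDegree ≤ d := by
  conv_lhs => rw [p.as_sum]
  rw [map_sum]
  refine (MvPolynomial.totalDegree_finset_sum _ _).trans (Finset.sup_le fun s hs => ?_)
  simp only [Function.comp, pderiv_monomial]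
  rcases Nat.eq_zero_or_pos (s x) with h0 | h0
  · simp [h0]
  · refine (MvPolynomial.totalDegree_monomial_le _ _).trans ?_
    show ((s - Finsupp.single x 1).sum fun _ e => e) ≤ d
    have hle : Finsupp.single x 1 ≤ s := by
      rw [Finsupp.single_le_iff]; exact h0
    have hsum : (s - Finsupp.single x 1).sum (fun _ e => e) + 1 = s.sum fun _ e => e := by
      have := tsub_add_cancel_of_le hle
      calc (s - Finsupp.single x 1).sum (fun _ e => e) + 1
          = (s - Finsupp.single x 1).sum (fun _ e => e)
            + (Finsupp.single x 1).sum (fun _ e => e) := by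
            rw [Finsupp.sum_single_index]; rfl
        _ = ((s - Finsupp.single x 1) + Finsupp.single x 1).sum (fun _ e => e) := by
            rw [Finsupp.sum_add_index'] <;> simp
        _ = s.sum fun _ e => e := by rw [this]
    have hst : s.sum (fun _ e => e) ≤ d + 1 := (MvPolynomial.le_totalDegree hs).trans h
    omega

variable {m n : ℕ}

/-- Euler-type operator `p ↦ ∑ₐ X (a,i) * ∂_(a,j) p`. -/
noncomputable def EopL (i j : Fin n) :
    MvPolynomial (Fin m × Fin n) ℝ →ₗ[ℝ] MvPolynomial (Fin m × Fin n) ℝ :=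
  ∑ a : Fin m, (LinearMap.mulLeft ℝ (X (a, i))).comp (pderiv (a, j)).toLinearMap

/-- `p ↦ ∑ₐ ∂_(a,i) ∂_(a,j) p`. -/
noncomputable def DopL (i j : Fin n) :
    MvPolynomial (Fin m × Fin n) ℝ →ₗ[ℝ] MvPolynomial (Fin m × Fin n) ℝ :=
  ∑ a : Fin m, ((pderiv (a, i)).toLinearMap).comp (pderiv (a, j)).toLinearMap

lemma EopL_apply (i j : Fin n) (p : MvPolynomial (Fin m × Fin n) ℝ) :
    EopL i j p = ∑ a : Fin m, X (a, i) * pderiv (a, j) p := by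
  simp [EopL, LinearMap.sum_apply, LinearMap.mulLeft_apply]

lemma DopL_apply (i j : Fin n) (p : MvPolynomial (Fin m × Fin n) ℝ) :
    DopL i j p = ∑ a : Fin m, pderiv (a, i) (pderiv (a, j) p) := by
  simp [DopL, LinearMap.sum_apply]

lemma trLap_add (p q : MvPolynomial (Fin m × Fin n) ℝ) :
    trLapPoly (p + q) = trLapPoly p + trLapPoly q := by
  simp [trLapPoly, map_add, Finset.sum_add_distrib]

lemma trLap_smul (r : ℝ) (p : MvPolynomial (Fin m × Fin n) ℝ) :
    trLapPoly (r • p) = r • trLapPoly p := by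
  simp [trLapPoly, _root_.map_smul, Finset.smul_sum]

lemma trLap_sub (p q : MvPolynomial (Fin m × Fin n) ℝ) :
    trLapPoly (p - q) = trLapPoly p - trLapPoly q := by
  simp [trLapPoly, map_sub, Finset.sum_sub_distrib]

lemma trLap_zero : trLapPoly (0 : MvPolynomial (Fin m × Fin n) ℝ) = 0 := by
  simp [trLapPoly]

lemma trLap_iter_smul (k : ℕ) (r : ℝ) (p : MvPolynomial (Fin m × Fin n) ℝ) :
    trLapPoly^[k] (r • p) = r • trLapPoly^[k] p := by
  induction k generalizing p with
  | zero => simp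
  | succ k ih => simp [Function.iterate_succ_apply, trLap_smul, ih]

lemma trLap_iter_zero (k : ℕ) : trLapPoly^[k] (0 : MvPolynomial (Fin m × Fin n) ℝ) = 0 := by
  induction k with
  | zero => simp
  | succ k ih => simp [Function.iterate_succ_apply, trLap_zero, ih]

lemma dd_mulX (x y : σ) (q : MvPolynomial σ ℝ) :
    pderiv x (pderiv x (X y * q)) =
      X y * pderiv x (pderiv x q) +
        (if x = y then (2 : MvPolynomial σ ℝ) else 0) * pderiv x q := by
  rcases eq_or_ne x y with h | h
  · subst h
    rw [if_pos rfl]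
    simp only [pderiv_mul, pderiv_X_self, one_mul, map_add]
    ring
  · simp only [pderiv_mul, pderiv_X_of_ne (Ne.symm h), zero_mul, zero_add, map_add, if_neg h]
    simp [pderiv_X_of_ne (Ne.symm h)]

lemma comm3 (u v : σ) (p : MvPolynomial σ ℝ) :
    pderiv u (pderiv u (pderiv v p)) = pderiv v (pderiv u (pderiv u p)) := by
  rw [congrArg (pderiv u) (pp_comm u v p), pp_comm u v (pderiv u p)]

lemma trLap_Eop (i j : Fin n) (p : MvPolynomial (Fin m × Fin n) ℝ) :
    trLapPoly (EopL i j p) = EopL i j (trLapPoly p) + (2 : ℝ) • DopL i j p := by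
  classical
  have expand : ∀ (c : Fin n) (b : Fin m),
      pderiv (b, c) (pderiv (b, c) (∑ a : Fin m, X (a, i) * pderiv (a, j) p))
      = (∑ a : Fin m, X (a, i) * pderiv (b, c) (pderiv (b, c) (pderiv (a, j) p)))
        + (if c = i then (2 : MvPolynomial (Fin m × Fin n) ℝ) *
            pderiv (b, i) (pderiv (b, j) p) else 0) := by
    intro c b
    rw [map_sum, map_sum,
      Finset.sum_congr rfl (fun a _ => dd_mulX (b, c) (a, i) (pderiv (a, j) p)),
      Finset.sum_add_distrib]
    congr 1
    have : ∀ a : Fin m,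
        (if (b, c) = (a, i) then (2 : MvPolynomial (Fin m × Fin n) ℝ) else 0) *
          pderiv (b, c) (pderiv (a, j) p)
        = if a = b then (if c = i then
            (2 : MvPolynomial (Fin m × Fin n) ℝ) * pderiv (b, c) (pderiv (a, j) p) else 0)
          else 0 := by
      intro a
      by_cases hab : a = b
      · subst hab
        by_cases hci : c = i <;> simp [hci, Prod.ext_iff]
      · have hba : ¬ b = a := fun h => hab h.symm
        simp [Prod.ext_iff, hab, hba]
    rw [Finset.sum_congr rfl fun a _ => this a]
    rw [Finset.sum_ite_eq' Finset.univ b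
      (fun a => if c = i then (2 : MvPolynomial (Fin m × Fin n) ℝ) *
        pderiv (b, c) (pderiv (a, j) p) else 0)]
    simp only [Finset.mem_univ, if_true]
    by_cases hci : c = i
    · subst hci; simp
    · simp [hci]
  show (∑ c : Fin n, ∑ b : Fin m, pderiv (b, c) (pderiv (b, c) (EopL i j p))) = _
  rw [EopL_apply]
  rw [Finset.sum_congr rfl fun c _ => Finset.sum_congr rfl fun b _ => expand c b]
  simp only [Finset.sum_add_distrib]
  congr 1
  · -- main part
    rw [EopL_apply]
    have key : ∀ a : Fin m, X (a, i) * pderiv (a, j) (trLapPoly p)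
        = ∑ c : Fin n, ∑ b : Fin m, X (a, i) *
            pderiv (b, c) (pderiv (b, c) (pderiv (a, j) p)) := by
      intro a
      rw [show trLapPoly p = ∑ c : Fin n, ∑ b : Fin m, pderiv (b, c) (pderiv (b, c) p) from rfl,
        map_sum, Finset.mul_sum]
      refine Finset.sum_congr rfl fun c _ => ?_
      rw [map_sum, Finset.mul_sum]
      refine Finset.sum_congr rfl fun b _ => ?_
      rw [comm3 (b, c) (a, j) p]
    rw [Finset.sum_congr rfl fun a (_ : a ∈ Finset.univ) => key a]
    calc (∑ c : Fin n, ∑ b : Fin m, ∑ a : Fin m,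
            X (a, i) * pderiv (b, c) (pderiv (b, c) (pderiv (a, j) p)))
        = ∑ c : Fin n, ∑ a : Fin m, ∑ b : Fin m,
            X (a, i) * pderiv (b, c) (pderiv (b, c) (pderiv (a, j) p)) :=
          Finset.sum_congr rfl fun c _ => Finset.sum_comm
      _ = ∑ a : Fin m, ∑ c : Fin n, ∑ b : Fin m,
            X (a, i) * pderiv (b, c) (pderiv (b, c) (pderiv (a, j) p)) := Finset.sum_comm
  · -- defect part
    rw [Finset.sum_comm]
    simp only [Finset.sum_ite_eq' Finset.univ i, Finset.mem_univ, if_true]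
    rw [DopL_apply, Finset.smul_sum]
    refine Finset.sum_congr rfl fun b _ => ?_
    rw [two_smul, two_mul]

lemma comm4 (u v w : σ) (p : MvPolynomial σ ℝ) :
    pderiv w (pderiv w (pderiv u (pderiv v p)))
      = pderiv u (pderiv v (pderiv w (pderiv w p))) := by
  rw [comm3 w u (pderiv v p), congrArg (pderiv u) (comm3 w v p)]

lemma trLap_Dop (i j : Fin n) (p : MvPolynomial (Fin m × Fin n) ℝ) :
    trLapPoly (DopL i j p) = DopL i j (trLapPoly p) := by
  show (∑ c : Fin n, ∑ b : Fin m, pderiv (b, c) (pderiv (b, c) (DopL i j p))) = _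
  rw [DopL_apply]
  have e1 : ∀ (c : Fin n) (b : Fin m),
      pderiv (b, c) (pderiv (b, c) (∑ a : Fin m, pderiv (a, i) (pderiv (a, j) p)))
      = ∑ a : Fin m, pderiv (a, i) (pderiv (a, j) (pderiv (b, c) (pderiv (b, c) p))) := by
    intro c b
    rw [map_sum, map_sum]
    exact Finset.sum_congr rfl fun a _ => comm4 (a, i) (a, j) (b, c) p
  rw [Finset.sum_congr rfl fun c (_ : c ∈ Finset.univ) =>
    Finset.sum_congr rfl fun b (_ : b ∈ Finset.univ) => e1 c b]
  rw [DopL_apply]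
  have e2 : ∀ a : Fin m, pderiv (a, i) (pderiv (a, j) (trLapPoly p))
      = ∑ c : Fin n, ∑ b : Fin m,
          pderiv (a, i) (pderiv (a, j) (pderiv (b, c) (pderiv (b, c) p))) := by
    intro a
    rw [show trLapPoly p = ∑ c : Fin n, ∑ b : Fin m, pderiv (b, c) (pderiv (b, c) p) from rfl,
      map_sum, map_sum]
    exact Finset.sum_congr rfl fun c _ => by rw [map_sum, map_sum]
  rw [Finset.sum_congr rfl fun a (_ : a ∈ Finset.univ) => e2 a]
  calc (∑ c : Fin n, ∑ b : Fin m, ∑ a : Fin m,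
          pderiv (a, i) (pderiv (a, j) (pderiv (b, c) (pderiv (b, c) p))))
      = ∑ c : Fin n, ∑ a : Fin m, ∑ b : Fin m,
          pderiv (a, i) (pderiv (a, j) (pderiv (b, c) (pderiv (b, c) p))) :=
        Finset.sum_congr rfl fun c _ => Finset.sum_comm
    _ = ∑ a : Fin m, ∑ c : Fin n, ∑ b : Fin m,
          pderiv (a, i) (pderiv (a, j) (pderiv (b, c) (pderiv (b, c) p))) := Finset.sum_comm

lemma trLap_iter_sub (k : ℕ) (p q : MvPolynomial (Fin m × Fin n) ℝ) :
    trLapPoly^[k] (p - q) = trLapPoly^[k] p - trLapPoly^[k] q := by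
  induction k generalizing p q with
  | zero => simp
  | succ k ih => simp [Function.iterate_succ_apply, trLap_sub, ih]

lemma Dop_iter (i j : Fin n) (k : ℕ) (p : MvPolynomial (Fin m × Fin n) ℝ) :
    DopL i j (trLapPoly^[k] p) = trLapPoly^[k] (DopL i j p) := by
  induction k generalizing p with
  | zero => simp
  | succ k ih =>
      rw [Function.iterate_succ_apply, Function.iterate_succ_apply, ih, trLap_Dop]

lemma Eop_lap (i j : Fin n) (p : MvPolynomial (Fin m × Fin n) ℝ) :
    EopL i j (trLapPoly p) = trLapPoly (EopL i j p) - (2 : ℝ) • DopL i j p := by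
  rw [trLap_Eop]; abel

lemma Eop_iter (i j : Fin n) (k : ℕ) (p : MvPolynomial (Fin m × Fin n) ℝ) :
    EopL i j (trLapPoly^[k + 1] p)
      = trLapPoly^[k + 1] (EopL i j p)
        - ((2 * (k + 1) : ℝ)) • DopL i j (trLapPoly^[k] p) := by
  induction k generalizing p with
  | zero => simpa using Eop_lap i j p
  | succ k ih =>
      rw [show trLapPoly^[k + 1 + 1] p = trLapPoly^[k + 1] (trLapPoly p) from
          Function.iterate_succ_apply _ _ _,
        ih (trLapPoly p), Eop_lap, trLap_iter_sub, trLap_iter_smul,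
        show trLapPoly^[k + 1] (trLapPoly (EopL i j p)) = trLapPoly^[k + 1 + 1] (EopL i j p) from
          (Function.iterate_succ_apply _ _ _).symm,
        show trLapPoly^[k + 1] (DopL i j p) = DopL i j (trLapPoly^[k + 1] p) from
          (Dop_iter i j (k + 1) p).symm,
        show trLapPoly^[k] (trLapPoly p) = trLapPoly^[k + 1] p from
          (Function.iterate_succ_apply _ _ _).symm]
      rw [sub_sub, ← add_smul]
      congr 1
      push_cast
      ring

lemma trLap_deg_le {p : MvPolynomial (Fin m × Fin n) ℝ} {d : ℕ}
    (h : p.totalDegree ≤ d + 2) : (trLapPoly p).totalDegree ≤ d := by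
  refine (MvPolynomial.totalDegree_finset_sum _ _).trans (Finset.sup_le fun c _ => ?_)
  refine (MvPolynomial.totalDegree_finset_sum _ _).trans (Finset.sup_le fun b _ => ?_)
  exact pderiv_deg_le (pderiv_deg_le (by omega : p.totalDegree ≤ (d + 1) + 1) _) _

lemma trLap_kill {p : MvPolynomial (Fin m × Fin n) ℝ} (h : p.totalDegree ≤ 1) :
    trLapPoly p = 0 := by
  refine Finset.sum_eq_zero fun c _ => Finset.sum_eq_zero fun b _ => ?_
  have h1 : (pderiv (b, c) p).totalDegree ≤ 0 := pderiv_deg_le (by omega) _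
  exact pderiv_deg0 (Nat.le_zero.mp h1) _

lemma trLap_iter_kill : ∀ (k : ℕ) (p : MvPolynomial (Fin m × Fin n) ℝ),
    p.totalDegree < 2 * k → trLapPoly^[k] p = 0 := by
  intro k
  induction k with
  | zero => intro p hp; omega
  | succ k ih =>
      intro p hp
      by_cases h1 : p.totalDegree ≤ 1
      · rw [Function.iterate_succ_apply, trLap_kill h1, trLap_iter_zero]
      · have h2 : (trLapPoly p).totalDegree ≤ 2 * k - 1 := trLap_deg_le (by omega)
        rw [Function.iterate_succ_apply]
        exact ih _ (by omega)

lemma Dop_deg_kill (i j : Fin n) {p : MvPolynomial (Fin m × Fin n) ℝ}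
    (h : p.totalDegree ≤ 1) : DopL i j p = 0 := by
  rw [DopL_apply]
  refine Finset.sum_eq_zero fun a _ => ?_
  have h1 : (pderiv (a, j) p).totalDegree ≤ 0 := pderiv_deg_le (by omega) _
  rw [pderiv_deg0 (Nat.le_zero.mp h1)]

/-- `exp(c · tr Δ)` applied to a polynomial (a finite sum). -/
noncomputable def expTrLap {m n : ℕ} (c : ℝ)
    (p : MvPolynomial (Fin m × Fin n) ℝ) : MvPolynomial (Fin m × Fin n) ℝ :=
  ∑ k ∈ Finset.range (p.totalDegree + 1),
    (c ^ k / k.factorial : ℝ) • trLapPoly^[k] p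

lemma Eop_exp (i j : Fin n) (c r : ℝ) (P : MvPolynomial (Fin m × Fin n) ℝ)
    (hP : EopL i j P = r • P) :
    EopL i j (expTrLap c P)
      = r • expTrLap c P - (2 * c) • DopL i j (expTrLap c P) := by
  classical
  have hlast : DopL i j (trLapPoly^[P.totalDegree] P) = 0 := by
    rcases Nat.eq_zero_or_pos P.totalDegree with h0 | h0
    · rw [h0, Function.iterate_zero_apply]
      exact Dop_deg_kill i j (by omega)
    · rw [trLap_iter_kill P.totalDegree P (by omega)]
      exact map_zero _
  have lhs_eq : EopL i j (expTrLap c P)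
      = (∑ k ∈ Finset.range P.totalDegree,
          ((c ^ (k + 1) / (k + 1).factorial : ℝ) •
            (r • trLapPoly^[k + 1] P
              - ((2 * ((k : ℝ) + 1)) • DopL i j (trLapPoly^[k] P)))))
        + (c ^ 0 / Nat.factorial 0 : ℝ) • (r • P) := by
    rw [expTrLap, map_sum]
    have : ∀ k, EopL i j ((c ^ k / k.factorial : ℝ) • trLapPoly^[k] P)
        = (c ^ k / k.factorial : ℝ) • EopL i j (trLapPoly^[k] P) := fun k => _root_.map_smul _ _ _
    rw [Finset.sum_congr rfl fun k _ => this k, Finset.sum_range_succ']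
    congr 1
    · refine Finset.sum_congr rfl fun k _ => ?_
      rw [Eop_iter, hP, trLap_iter_smul]
    · rw [Function.iterate_zero_apply, hP]
  have rhs1 : r • expTrLap c P
      = (∑ k ∈ Finset.range P.totalDegree,
          (c ^ (k + 1) / (k + 1).factorial : ℝ) • (r • trLapPoly^[k + 1] P))
        + (c ^ 0 / Nat.factorial 0 : ℝ) • (r • P) := by
    rw [expTrLap, Finset.smul_sum, Finset.sum_range_succ']
    congr 1
    · refine Finset.sum_congr rfl fun k _ => ?_
      rw [smul_comm]
    · rw [Function.iterate_zero_apply, smul_comm]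
  have rhs2 : (2 * c) • DopL i j (expTrLap c P)
      = ∑ k ∈ Finset.range P.totalDegree,
          (c ^ (k + 1) / (k + 1).factorial : ℝ) •
            ((2 * ((k : ℝ) + 1)) • DopL i j (trLapPoly^[k] P)) := by
    rw [expTrLap, map_sum, Finset.sum_range_succ]
    have : ∀ k, DopL i j ((c ^ k / k.factorial : ℝ) • trLapPoly^[k] P)
        = (c ^ k / k.factorial : ℝ) • DopL i j (trLapPoly^[k] P) := fun k => _root_.map_smul _ _ _
    rw [this, hlast, smul_zero, add_zero, Finset.smul_sum]
    refine Finset.sum_congr rfl fun k _ => ?_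
    rw [this, smul_smul, smul_smul]
    congr 1
    rw [Nat.factorial_succ]
    push_cast
    have : ((k : ℝ) + 1) ≠ 0 := by positivity
    field_simp
    ring
  rw [lhs_eq, rhs1, rhs2]
  simp only [smul_sub]
  rw [Finset.sum_sub_distrib]
  abel


lemma euler_step {m n : ℕ} (β : ℕ) (P : MvPolynomial (Fin m × Fin n) ℝ)
    (hhom : ∀ (U : Fin m → Fin n → ℝ) (N : Matrix (Fin n) (Fin n) ℝ),
      MvPolynomial.eval (fun q => ∑ c, U q.1 c * N c q.2) P =
        N.det ^ β * MvPolynomial.eval (fun q => U q.1 q.2) P)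
    (i j : Fin n) :
    EopL i j P = (if i = j then (β : ℝ) else 0) • P := by
  classical
  apply MvPolynomial.funext
  intro x
  set U : Fin m → Fin n → ℝ := fun a c => x (a, c) with hU
  have hx : (fun q : Fin m × Fin n => U q.1 q.2) = x := by
    funext q; rcases q with ⟨a, c⟩; rfl
  set V : Fin m → Fin n → ℝ := fun a c => if c = j then U a i else 0 with hV
  set δ : ℝ := if i = j then 1 else 0 with hδ
  have hline : HasDerivAt (fun t : ℝ => U + t • V) V 0 := by
    have h1 : HasDerivAt (fun t : ℝ => t • V) ((1 : ℝ) • V) 0 :=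
      (hasDerivAt_id 0).smul_const V
    simpa using h1.const_add U
  have hg0 : U + (0 : ℝ) • V = U := by simp
  have hF : HasDerivAt
      (fun t : ℝ => MvPolynomial.eval (fun q : Fin m × Fin n => (U + t • V) q.1 q.2) P)
      ((∑ q : Fin m × Fin n,
        MvPolynomial.eval (fun r => U r.1 r.2) (pderiv q P) • eCLM q) V) 0 := by
    have hf := hasFDerivAt_evalP P U
    have := hf.comp_hasDerivAt_of_eq 0 hline hg0.symm
    exact this
  have hcurve : ∀ t : ℝ,
      MvPolynomial.eval (fun q : Fin m × Fin n => (U + t • V) q.1 q.2) P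
        = (1 + t * δ) ^ β * MvPolynomial.eval (fun q : Fin m × Fin n => U q.1 q.2) P := by
    intro t
    set u : Fin n → ℝ := fun c => if c = i then t else 0 with hu
    set v : Fin n → ℝ := fun c => if c = j then 1 else 0 with hv
    set N : Matrix (Fin n) (Fin n) ℝ := 1 + replicateCol Unit u * replicateRow Unit v with hN
    have hpoint : (fun q : Fin m × Fin n => ∑ c, U q.1 c * N c q.2)
        = fun q : Fin m × Fin n => (U + t • V) q.1 q.2 := by
      funext q
      have hsum : ∀ c : Fin n, U q.1 c * N c q.2
          = (if c = q.2 then U q.1 c else 0)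
            + (if c = i then U q.1 c * t * v q.2 else 0) := by
        intro c
        rw [hN]
        simp only [Matrix.add_apply, Matrix.mul_apply, Matrix.one_apply, Matrix.replicateCol_apply,
          Matrix.replicateRow_apply, Finset.univ_unique, Finset.sum_const, Finset.card_singleton,
          one_smul]
        by_cases h1 : c = q.2 <;> by_cases h2 : c = i <;>
          simp only [h1, h2, hu, hv, if_true, if_false, ite_mul, mul_ite, mul_zero, zero_mul,
            mul_one, one_mul, add_zero, zero_add, if_neg, eq_self_iff_true] <;>
          split_ifs <;> simp_all <;> ring
      rw [Finset.sum_congr rfl fun c _ => hsum c, Finset.sum_add_distrib,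
        Finset.sum_ite_eq' Finset.univ q.2 (fun c => U q.1 c),
        Finset.sum_ite_eq' Finset.univ i (fun c => U q.1 c * t * v q.2)]
      simp only [Finset.mem_univ, if_true, Pi.add_apply, Pi.smul_apply, smul_eq_mul]
      rw [hV, hv]
      by_cases hqj : q.2 = j <;> simp [hqj] <;> ring
    have hdet : N.det = 1 + t * δ := by
      rw [hN, Matrix.det_one_add_replicateCol_mul_replicateRow]
      rw [hδ]
      congr 1
      simp only [dotProduct, hu, hv]
      by_cases h : i = j
      · subst h
        rw [Finset.sum_eq_single i]
        · simp
        · intro b _ hb; simp [hb]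
        · intro hs; exact absurd (Finset.mem_univ i) hs
      · rw [Finset.sum_eq_zero]
        · simp [h]
        · intro b _
          rcases eq_or_ne b j with rfl | hbj
          · simp [Ne.symm h]
          · simp [hbj]
    have := hhom U N
    rw [hpoint, hdet] at this
    exact this
  have hG : HasDerivAt (fun t : ℝ => (1 + t * δ) ^ β *
      MvPolynomial.eval (fun q : Fin m × Fin n => U q.1 q.2) P)
      ((β : ℝ) * δ * MvPolynomial.eval (fun q : Fin m × Fin n => U q.1 q.2) P) 0 := by
    have h1 : HasDerivAt (fun t : ℝ => 1 + t * δ) δ 0 := by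
      simpa using ((hasDerivAt_id 0).mul_const δ).const_add (1 : ℝ)
    have h2 := (h1.pow β).mul_const (MvPolynomial.eval (fun q : Fin m × Fin n => U q.1 q.2) P)
    simpa using h2
  have hFG : (fun t : ℝ => MvPolynomial.eval
        (fun q : Fin m × Fin n => (U + t • V) q.1 q.2) P)
      = fun t : ℝ => (1 + t * δ) ^ β *
        MvPolynomial.eval (fun q : Fin m × Fin n => U q.1 q.2) P := funext hcurve
  rw [hFG] at hF
  have huniq := hF.unique hG
  have happ : (∑ q : Fin m × Fin n,
      MvPolynomial.eval (fun r => U r.1 r.2) (pderiv q P) • eCLM q) V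
      = ∑ a : Fin m, U a i * MvPolynomial.eval (fun r => U r.1 r.2) (pderiv (a, j) P) := by
    rw [ContinuousLinearMap.coe_sum', Finset.sum_apply]
    simp only [ContinuousLinearMap.smul_apply, eCLM_apply, smul_eq_mul]
    rw [Fintype.sum_prod_type]
    refine Finset.sum_congr rfl fun a _ => ?_
    have hterm : ∀ c : Fin n,
        MvPolynomial.eval (fun r => U r.1 r.2) (pderiv (a, c) P) * V a c
        = if c = j then
            MvPolynomial.eval (fun r => U r.1 r.2) (pderiv (a, c) P) * U a i else 0 := by
      intro c; by_cases h : c = j <;> simp [hV, h]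
    rw [Finset.sum_congr rfl fun c _ => hterm c,
      Finset.sum_ite_eq' Finset.univ j
        (fun c => MvPolynomial.eval (fun r => U r.1 r.2) (pderiv (a, c) P) * U a i)]
    simp [mul_comm]
  rw [happ] at huniq
  rw [EopL_apply, _root_.map_sum, MvPolynomial.smul_eq_C_mul, eval_mul, eval_C]
  have hrhs : (if i = j then (β : ℝ) else 0) * MvPolynomial.eval x P
      = (β : ℝ) * δ * MvPolynomial.eval x P := by
    rw [hδ]; by_cases h : i = j <;> simp [h]
  rw [hrhs]
  rw [hx] at huniq
  calc (∑ a : Fin m, MvPolynomial.eval x (X (a, i) * pderiv (a, j) P))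
      = ∑ a : Fin m, U a i * MvPolynomial.eval x (pderiv (a, j) P) := by
        refine Finset.sum_congr rfl fun a _ => ?_
        rw [eval_mul, eval_X]
    _ = (β : ℝ) * δ * MvPolynomial.eval x P := huniq


/-- for a polynomial `P` with `P(UN) = (det N)^β P(U)`,
`h_P = exp(−tr Δ/(8π)) P` and `f_P(U) = h_P(U)·exp(−2π tr(UᵀU))`, the function
`f_P` satisfies `(E − Δ_{−I}/(4π)) f_P = −(β+m)·I·f_P`, where `Δ_{−I} = −Δ`. -/
theorem stmt10 {m n : ℕ} (β : ℕ) (P : MvPolynomial (Fin m × Fin n) ℝ)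
    (hhom : ∀ (U : Fin m → Fin n → ℝ) (N : Matrix (Fin n) (Fin n) ℝ),
      MvPolynomial.eval (fun q => ∑ c, U q.1 c * N c q.2) P =
        N.det ^ β * MvPolynomial.eval (fun q => U q.1 q.2) P)
    (U : Fin m → Fin n → ℝ) (i j : Fin n) :
    (∑ d, U d i * pd d j (fun W : Fin m → Fin n → ℝ =>
        MvPolynomial.eval (fun q => W q.1 q.2) (expTrLap (-(8 * Real.pi)⁻¹) P) *
          Real.exp (-2 * Real.pi * ∑ p, ∑ q, W p q ^ 2)) U) +
      (4 * Real.pi)⁻¹ *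
        (∑ a, pd a i (pd a j fun W : Fin m → Fin n → ℝ =>
          MvPolynomial.eval (fun q => W q.1 q.2) (expTrLap (-(8 * Real.pi)⁻¹) P) *
            Real.exp (-2 * Real.pi * ∑ p, ∑ q, W p q ^ 2)) U) =
      -((β : ℝ) + m) * (if i = j then 1 else 0) *
        (MvPolynomial.eval (fun q => U q.1 q.2) (expTrLap (-(8 * Real.pi)⁻¹) P) *
          Real.exp (-2 * Real.pi * ∑ p, ∑ q, U p q ^ 2)) := by
  classical
  set h : MvPolynomial (Fin m × Fin n) ℝ := expTrLap (-(8 * Real.pi)⁻¹) P with hh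
  have hπ : Real.pi ≠ 0 := Real.pi_ne_zero
  set δr : ℝ := if i = j then 1 else 0 with hδr
  -- first derivative rewriting
  have hfirst : ∀ d : Fin m,
      pd d j (fun W : Fin m → Fin n → ℝ =>
        MvPolynomial.eval (fun q => W q.1 q.2) h *
          Real.exp (-2 * Real.pi * ∑ p, ∑ q, W p q ^ 2)) U
      = MvPolynomial.eval (fun q => U q.1 q.2)
          (pderiv (d, j) h - C (4 * Real.pi) * (X (d, j) * h)) *
          Real.exp (-2 * Real.pi * ∑ p, ∑ q, U p q ^ 2) :=
    fun d => pd_eval_mul_gauss h d j U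
  have hsecond : ∀ a : Fin m,
      pd a i (pd a j fun W : Fin m → Fin n → ℝ =>
        MvPolynomial.eval (fun q => W q.1 q.2) h *
          Real.exp (-2 * Real.pi * ∑ p, ∑ q, W p q ^ 2)) U
      = MvPolynomial.eval (fun q => U q.1 q.2)
          (pderiv (a, i) (pderiv (a, j) h - C (4 * Real.pi) * (X (a, j) * h))
            - C (4 * Real.pi) * (X (a, i) *
                (pderiv (a, j) h - C (4 * Real.pi) * (X (a, j) * h)))) *
          Real.exp (-2 * Real.pi * ∑ p, ∑ q, U p q ^ 2) := by
    intro a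
    have hfun : (pd a j fun W : Fin m → Fin n → ℝ =>
        MvPolynomial.eval (fun q => W q.1 q.2) h *
          Real.exp (-2 * Real.pi * ∑ p, ∑ q, W p q ^ 2))
        = fun W : Fin m → Fin n → ℝ =>
            MvPolynomial.eval (fun q => W q.1 q.2)
              (pderiv (a, j) h - C (4 * Real.pi) * (X (a, j) * h)) *
              Real.exp (-2 * Real.pi * ∑ p, ∑ q, W p q ^ 2) :=
      funext fun W => pd_eval_mul_gauss h a j W
    rw [hfun]
    exact pd_eval_mul_gauss _ a i U
  simp only [hfirst, hsecond]
  -- expand the evaluations into scalars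
  have e1 : ∀ d : Fin m, MvPolynomial.eval (fun q : Fin m × Fin n => U q.1 q.2)
      (pderiv (d, j) h - C (4 * Real.pi) * (X (d, j) * h))
      = MvPolynomial.eval (fun q : Fin m × Fin n => U q.1 q.2) (pderiv (d, j) h)
        - 4 * Real.pi * (U d j * MvPolynomial.eval (fun q : Fin m × Fin n => U q.1 q.2) h) := by
    intro d
    simp only [eval_sub, eval_mul, eval_C, eval_X]
  have e2 : ∀ a : Fin m, MvPolynomial.eval (fun q : Fin m × Fin n => U q.1 q.2)
      (pderiv (a, i) (pderiv (a, j) h - C (4 * Real.pi) * (X (a, j) * h))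
        - C (4 * Real.pi) * (X (a, i) *
            (pderiv (a, j) h - C (4 * Real.pi) * (X (a, j) * h))))
      = MvPolynomial.eval (fun q : Fin m × Fin n => U q.1 q.2) (pderiv (a, i) (pderiv (a, j) h))
        - 4 * Real.pi * (δr * MvPolynomial.eval (fun q : Fin m × Fin n => U q.1 q.2) h)
        - 4 * Real.pi *
            (U a j * MvPolynomial.eval (fun q : Fin m × Fin n => U q.1 q.2) (pderiv (a, i) h))
        - 4 * Real.pi *
            (U a i * MvPolynomial.eval (fun q : Fin m × Fin n => U q.1 q.2) (pderiv (a, j) h))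
        + (4 * Real.pi) * (4 * Real.pi) *
            (U a i * (U a j * MvPolynomial.eval (fun q : Fin m × Fin n => U q.1 q.2) h)) := by
    intro a
    have hX : (pderiv ((a, i) : Fin m × Fin n) (X (a, j)) : MvPolynomial (Fin m × Fin n) ℝ)
        = if i = j then 1 else 0 := by
      by_cases hij : i = j
      · subst hij; simp
      · have hne : ((a, j) : Fin m × Fin n) ≠ (a, i) := by
          simp [Prod.ext_iff]; exact fun hji => hij hji.symm
        rw [pderiv_X_of_ne hne, if_neg hij]
    have hps : pderiv ((a, i) : Fin m × Fin n)
        (pderiv (a, j) h - C (4 * Real.pi) * (X (a, j) * h))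
        = pderiv ((a, i) : Fin m × Fin n) (pderiv (a, j) h)
          - pderiv ((a, i) : Fin m × Fin n) (C (4 * Real.pi) * (X (a, j) * h)) :=
      Derivation.map_sub _ _ _
    rw [hps, pderiv_C_mul, pderiv_mul, hX]
    simp only [eval_sub, eval_add, eval_mul, eval_C, eval_X, hδr]
    by_cases hij : i = j <;> simp [hij] <;> ring
  simp only [e1, e2]
  -- core Euler identity, evaluated
  have hEuler : EopL j i P = ((β : ℝ) * δr) • P := by
    have := euler_step β P hhom j i
    have hite : (if j = i then (β : ℝ) else 0) = (β : ℝ) * δr := by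
      rw [hδr]
      by_cases hij : i = j
      · subst hij; simp
      · simp [hij, Ne.symm hij]
    rwa [hite] at this
  have hcorePoly := Eop_exp j i (-(8 * Real.pi)⁻¹) ((β : ℝ) * δr) P hEuler
  rw [← hh] at hcorePoly
  have hcore : (∑ a : Fin m,
        U a j * MvPolynomial.eval (fun q : Fin m × Fin n => U q.1 q.2) (pderiv (a, i) h))
      = (β : ℝ) * δr * MvPolynomial.eval (fun q : Fin m × Fin n => U q.1 q.2) h
        + (4 * Real.pi)⁻¹ * (∑ a : Fin m, MvPolynomial.eval (fun q : Fin m × Fin n => U q.1 q.2)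
            (pderiv (a, i) (pderiv (a, j) h))) := by
    have := congrArg (MvPolynomial.eval (fun q : Fin m × Fin n => U q.1 q.2)) hcorePoly
    rw [EopL_apply, _root_.map_sum, eval_sub, MvPolynomial.smul_eq_C_mul, eval_mul, eval_C,
      MvPolynomial.smul_eq_C_mul, eval_mul, eval_C, DopL_apply, _root_.map_sum] at this
    have hl : ∀ a : Fin m, MvPolynomial.eval (fun q : Fin m × Fin n => U q.1 q.2)
        (X ((a, j) : Fin m × Fin n) * pderiv (a, i) h)
        = U a j * MvPolynomial.eval (fun q : Fin m × Fin n => U q.1 q.2) (pderiv (a, i) h) := by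
      intro a; rw [eval_mul, eval_X]
    have hr : ∀ a : Fin m, MvPolynomial.eval (fun q : Fin m × Fin n => U q.1 q.2)
        (pderiv ((a, j) : Fin m × Fin n) (pderiv (a, i) h))
        = MvPolynomial.eval (fun q : Fin m × Fin n => U q.1 q.2)
            (pderiv (a, i) (pderiv (a, j) h)) := by
      intro a; rw [pp_comm]
    rw [Finset.sum_congr rfl fun a _ => hl a, Finset.sum_congr rfl fun a _ => hr a] at this
    rw [this]
    have h28 : (2 : ℝ) * (-(8 * Real.pi)⁻¹) = -(4 * Real.pi)⁻¹ := by
      rw [show (8 : ℝ) * Real.pi = 2 * (4 * Real.pi) by ring, mul_inv]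
      field_simp
    rw [h28]
    ring
  -- final algebra
  have hsplit1 : (∑ d : Fin m, U d i *
      ((MvPolynomial.eval (fun q : Fin m × Fin n => U q.1 q.2) (pderiv (d, j) h)
        - 4 * Real.pi * (U d j * MvPolynomial.eval (fun q : Fin m × Fin n => U q.1 q.2) h)) *
        Real.exp (-2 * Real.pi * ∑ p, ∑ q, U p q ^ 2)))
      = (∑ d : Fin m, U d i *
          MvPolynomial.eval (fun q : Fin m × Fin n => U q.1 q.2) (pderiv (d, j) h)) *
          Real.exp (-2 * Real.pi * ∑ p, ∑ q, U p q ^ 2)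
        - 4 * Real.pi * ((∑ d : Fin m, U d i * U d j) *
          (MvPolynomial.eval (fun q : Fin m × Fin n => U q.1 q.2) h *
            Real.exp (-2 * Real.pi * ∑ p, ∑ q, U p q ^ 2))) := by
    have step : ∀ d : Fin m, U d i *
        ((MvPolynomial.eval (fun q : Fin m × Fin n => U q.1 q.2) (pderiv (d, j) h)
          - 4 * Real.pi * (U d j * MvPolynomial.eval (fun q : Fin m × Fin n => U q.1 q.2) h)) *
          Real.exp (-2 * Real.pi * ∑ p, ∑ q, U p q ^ 2))
        = (U d i * MvPolynomial.eval (fun q : Fin m × Fin n => U q.1 q.2) (pderiv (d, j) h)) *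
            Real.exp (-2 * Real.pi * ∑ p, ∑ q, U p q ^ 2)
          - (U d i * U d j) * (4 * Real.pi *
            (MvPolynomial.eval (fun q : Fin m × Fin n => U q.1 q.2) h *
              Real.exp (-2 * Real.pi * ∑ p, ∑ q, U p q ^ 2))) := fun d => by ring
    rw [Finset.sum_congr rfl fun d _ => step d, Finset.sum_sub_distrib,
      ← Finset.sum_mul, ← Finset.sum_mul]
    ring
  have hsplit2 : (∑ a : Fin m,
      ((MvPolynomial.eval (fun q : Fin m × Fin n => U q.1 q.2) (pderiv (a, i) (pderiv (a, j) h))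
        - 4 * Real.pi * (δr * MvPolynomial.eval (fun q : Fin m × Fin n => U q.1 q.2) h)
        - 4 * Real.pi * (U a j *
            MvPolynomial.eval (fun q : Fin m × Fin n => U q.1 q.2) (pderiv (a, i) h))
        - 4 * Real.pi * (U a i *
            MvPolynomial.eval (fun q : Fin m × Fin n => U q.1 q.2) (pderiv (a, j) h))
        + (4 * Real.pi) * (4 * Real.pi) * (U a i *
            (U a j * MvPolynomial.eval (fun q : Fin m × Fin n => U q.1 q.2) h))) *
        Real.exp (-2 * Real.pi * ∑ p, ∑ q, U p q ^ 2)))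
      = (∑ a : Fin m, MvPolynomial.eval (fun q : Fin m × Fin n => U q.1 q.2)
            (pderiv (a, i) (pderiv (a, j) h))) *
          Real.exp (-2 * Real.pi * ∑ p, ∑ q, U p q ^ 2)
        - 4 * Real.pi * ((m : ℝ) * (δr * (MvPolynomial.eval (fun q : Fin m × Fin n => U q.1 q.2) h *
            Real.exp (-2 * Real.pi * ∑ p, ∑ q, U p q ^ 2))))
        - 4 * Real.pi * ((∑ a : Fin m, U a j *
            MvPolynomial.eval (fun q : Fin m × Fin n => U q.1 q.2) (pderiv (a, i) h)) *
            Real.exp (-2 * Real.pi * ∑ p, ∑ q, U p q ^ 2))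
        - 4 * Real.pi * ((∑ a : Fin m, U a i *
            MvPolynomial.eval (fun q : Fin m × Fin n => U q.1 q.2) (pderiv (a, j) h)) *
            Real.exp (-2 * Real.pi * ∑ p, ∑ q, U p q ^ 2))
        + (4 * Real.pi) * (4 * Real.pi) * ((∑ a : Fin m, U a i * U a j) *
            (MvPolynomial.eval (fun q : Fin m × Fin n => U q.1 q.2) h *
              Real.exp (-2 * Real.pi * ∑ p, ∑ q, U p q ^ 2))) := by
    have step : ∀ a : Fin m,
        ((MvPolynomial.eval (fun q : Fin m × Fin n => U q.1 q.2) (pderiv (a, i) (pderiv (a, j) h))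
          - 4 * Real.pi * (δr * MvPolynomial.eval (fun q : Fin m × Fin n => U q.1 q.2) h)
          - 4 * Real.pi * (U a j *
              MvPolynomial.eval (fun q : Fin m × Fin n => U q.1 q.2) (pderiv (a, i) h))
          - 4 * Real.pi * (U a i *
              MvPolynomial.eval (fun q : Fin m × Fin n => U q.1 q.2) (pderiv (a, j) h))
          + (4 * Real.pi) * (4 * Real.pi) * (U a i *
              (U a j * MvPolynomial.eval (fun q : Fin m × Fin n => U q.1 q.2) h))) *
          Real.exp (-2 * Real.pi * ∑ p, ∑ q, U p q ^ 2))
        = (MvPolynomial.eval (fun q : Fin m × Fin n => U q.1 q.2)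
              (pderiv (a, i) (pderiv (a, j) h)) *
            Real.exp (-2 * Real.pi * ∑ p, ∑ q, U p q ^ 2)
          - (U a j * MvPolynomial.eval (fun q : Fin m × Fin n => U q.1 q.2) (pderiv (a, i) h)) *
              (4 * Real.pi * Real.exp (-2 * Real.pi * ∑ p, ∑ q, U p q ^ 2))
          - (U a i * MvPolynomial.eval (fun q : Fin m × Fin n => U q.1 q.2) (pderiv (a, j) h)) *
              (4 * Real.pi * Real.exp (-2 * Real.pi * ∑ p, ∑ q, U p q ^ 2))
          + (U a i * U a j) * ((4 * Real.pi) * (4 * Real.pi) *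
              (MvPolynomial.eval (fun q : Fin m × Fin n => U q.1 q.2) h *
                Real.exp (-2 * Real.pi * ∑ p, ∑ q, U p q ^ 2))))
          - 4 * Real.pi * (δr * (MvPolynomial.eval (fun q : Fin m × Fin n => U q.1 q.2) h *
              Real.exp (-2 * Real.pi * ∑ p, ∑ q, U p q ^ 2))) := fun a => by ring
    rw [Finset.sum_congr rfl fun a _ => step a, Finset.sum_sub_distrib, Finset.sum_add_distrib,
      Finset.sum_sub_distrib, Finset.sum_sub_distrib, ← Finset.sum_mul, ← Finset.sum_mul,
      ← Finset.sum_mul, ← Finset.sum_mul, Finset.sum_const, Finset.card_univ,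
      Fintype.card_fin, nsmul_eq_mul]
    ring
  rw [hsplit1, hsplit2, hcore]
  field_simp
  ring
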